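/- Let q ≥ 1 and let a_1, ..., a_n be residues mod q with gcd(a_i, q) = 1 for all i. Let P ⊆ Z/qZ with |P| = k. Then the number of the 2^n subsets I ⊆ [n] with (∑_{i∈I} a_i mod q) ∈ P is at most ∑_{j : (n-k)/2 ≤ j < (n+k)/2} C(n,j)_q, where C(n,s)_q := ∑_{j ≡ s (mod q)} C(n,j) denotes the mod-q binomial coefficient. -/

import Mathlib

/-- The mod-q binomial coefficient `C(n,s)_q = ∑_{0 ≤ j ≤ n, j ≡ s (mod q)} C(n,j)`. -/
def modBinom (n q : ℕ) (s : ℤ) : ℕ :=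
  ∑ j ∈ Finset.range (n + 1), if ((j : ℤ) - s) % (q : ℤ) = 0 then n.choose j else 0

/-- The sum of the `k` middle mod-`q` binomial coefficients,
`_{(n-k)/2 ≤ j < (n+k)/2} C(n,j)_q` (the integers `j` in question all lie in `[-q, n+q]`
when `k ≤ q`). -/
noncomputable def middleSum (n q k : ℕ) : ℕ :=
  ∑ j ∈ Finset.Icc (-(q : ℤ)) ((n : ℤ) + q),
    if (n : ℤ) - k ≤ 2 * j ∧ 2 * j < (n : ℤ) + k then modBinom n q j else 0

open Finset

lemma modBinom_succ (n q : ℕ) (j : ℤ) :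
    modBinom (n + 1) q j = modBinom n q j + modBinom n q (j - 1) := by
  have e1 : modBinom (n+1) q j
      = (∑ t ∈ range (n+1), if (((t:ℤ)+1) - j) % (q:ℤ) = 0 then (n+1).choose (t+1) else 0)
        + (if ((0:ℤ) - j) % (q:ℤ) = 0 then 1 else 0) := by
    unfold modBinom
    rw [Finset.sum_range_succ']
    simp only [Nat.cast_add, Nat.cast_zero, Nat.cast_one, Nat.choose_zero_right]
  have e2 : modBinom n q (j-1)
      = ∑ t ∈ range (n+1), if (((t:ℤ)+1) - j) % (q:ℤ) = 0 then n.choose t else 0 := by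
    unfold modBinom
    refine Finset.sum_congr rfl fun t _ => ?_
    have h : (t:ℤ) - (j-1) = ((t:ℤ)+1) - j := by ring
    rw [h]
  have e3 : modBinom n q j
      = (∑ t ∈ range n, if (((t:ℤ)+1) - j) % (q:ℤ) = 0 then n.choose (t+1) else 0)
        + (if ((0:ℤ) - j) % (q:ℤ) = 0 then 1 else 0) := by
    unfold modBinom
    rw [Finset.sum_range_succ']
    simp only [Nat.cast_add, Nat.cast_zero, Nat.cast_one, Nat.choose_zero_right]
  have e4 : (∑ t ∈ range (n+1), if (((t:ℤ)+1) - j) % (q:ℤ) = 0 then n.choose (t+1) else 0)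
      = ∑ t ∈ range n, if (((t:ℤ)+1) - j) % (q:ℤ) = 0 then n.choose (t+1) else 0 := by
    rw [Finset.sum_range_succ, Nat.choose_succ_self]
    simp
  have e5 : ∀ t ∈ range (n+1), (if (((t:ℤ)+1) - j) % (q:ℤ) = 0 then (n+1).choose (t+1) else 0)
      = (if (((t:ℤ)+1) - j) % (q:ℤ) = 0 then n.choose t else 0)
        + (if (((t:ℤ)+1) - j) % (q:ℤ) = 0 then n.choose (t+1) else 0) := by
    intro t _
    rw [Nat.choose_succ_succ]
    split <;> simp
  rw [e1, e2, e3, Finset.sum_congr rfl e5, Finset.sum_add_distrib, e4]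
  omega

lemma window_ext (f : ℤ → ℕ) (c d lo hi LO HI : ℤ) (hl : LO ≤ lo) (hh : hi ≤ HI)
    (h : ∀ j : ℤ, c ≤ 2*j → 2*j < d → lo ≤ j ∧ j ≤ hi) :
    (∑ j ∈ Icc lo hi, if c ≤ 2*j ∧ 2*j < d then f j else 0)
      = ∑ j ∈ Icc LO HI, if c ≤ 2*j ∧ 2*j < d then f j else 0 := by
  apply Finset.sum_subset (Finset.Icc_subset_Icc hl hh)
  intro j hj hj'
  simp only [Finset.mem_Icc] at hj hj'
  have hne : ¬ (c ≤ 2*j ∧ 2*j < d) := by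
    intro hc
    have := h j hc.1 hc.2
    omega
  rw [if_neg hne]

lemma window_congr (f : ℤ → ℕ) (c d lo hi lo' hi' : ℤ)
    (h : ∀ j : ℤ, c ≤ 2*j → 2*j < d → (lo ≤ j ∧ j ≤ hi) ∧ (lo' ≤ j ∧ j ≤ hi')) :
    (∑ j ∈ Icc lo hi, if c ≤ 2*j ∧ 2*j < d then f j else 0)
      = ∑ j ∈ Icc lo' hi', if c ≤ 2*j ∧ 2*j < d then f j else 0 := by
  rw [window_ext f c d lo hi (min lo lo') (max hi hi') (min_le_left _ _) (le_max_left _ _)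
      (fun j h1 h2 => (h j h1 h2).1),
    window_ext f c d lo' hi' (min lo lo') (max hi hi') (min_le_right _ _) (le_max_right _ _)
      (fun j h1 h2 => (h j h1 h2).2)]

lemma middleSum_eq (n q k : ℕ) (hkq : k ≤ q + 1) (LO HI : ℤ)
    (hLO : LO ≤ -(q:ℤ)) (hHI : (n:ℤ) + q ≤ HI) :
    middleSum n q k
      = ∑ j ∈ Icc LO HI, if (n:ℤ) - (k:ℤ) ≤ 2*j ∧ 2*j < (n:ℤ) + (k:ℤ) then modBinom n q j else 0 := by
  unfold middleSum
  refine window_ext _ _ _ _ _ _ _ hLO hHI ?_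
  intro j h1 h2
  have hkq' : (k:ℤ) ≤ (q:ℤ) + 1 := by exact_mod_cast hkq
  have hn : (0:ℤ) ≤ n := Int.ofNat_nonneg n
  have hq : (0:ℤ) ≤ q := Int.ofNat_nonneg q
  omega

lemma middleSum_succ (n q k : ℕ) (hq : 1 ≤ q) (hk1 : 1 ≤ k) (hkq : k ≤ q) :
    middleSum (n+1) q k = middleSum n q (k+1) + middleSum n q (k-1) := by
  have hkq' : (k:ℤ) ≤ q := by exact_mod_cast hkq
  have hk1' : (1:ℤ) ≤ (k:ℤ) := by exact_mod_cast hk1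
  have hq' : (1:ℤ) ≤ (q:ℤ) := by exact_mod_cast hq
  have hn : (0:ℤ) ≤ n := Int.ofNat_nonneg n
  have hcast1 : ((n+1:ℕ) : ℤ) = (n:ℤ) + 1 := by push_cast; ring
  have hcast2 : ((k+1:ℕ) : ℤ) = (k:ℤ) + 1 := by push_cast; ring
  have hcast3 : ((k-1:ℕ) : ℤ) = (k:ℤ) - 1 := by
    rw [Nat.cast_sub hk1]; norm_num
  -- Left side over a big common range
  have E1 : middleSum (n+1) q k
      = ∑ j ∈ Icc (-(q:ℤ) - 9) ((n:ℤ) + q + 9),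
          if (n:ℤ) + 1 - (k:ℤ) ≤ 2*j ∧ 2*j < (n:ℤ) + 1 + (k:ℤ) then modBinom (n+1) q j else 0 := by
    rw [middleSum_eq (n+1) q k (by omega) (-(q:ℤ) - 9) ((n:ℤ) + q + 9) (by omega)
      (by rw [hcast1]; omega)]
    rw [hcast1]
  have E2 : (∑ j ∈ Icc (-(q:ℤ) - 9) ((n:ℤ) + q + 9),
        if (n:ℤ) + 1 - (k:ℤ) ≤ 2*j ∧ 2*j < (n:ℤ) + 1 + (k:ℤ) then modBinom (n+1) q j else 0)
      = (∑ j ∈ Icc (-(q:ℤ) - 9) ((n:ℤ) + q + 9),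
          if (n:ℤ) + 1 - (k:ℤ) ≤ 2*j ∧ 2*j < (n:ℤ) + 1 + (k:ℤ) then modBinom n q j else 0)
        + (∑ j ∈ Icc (-(q:ℤ) - 9) ((n:ℤ) + q + 9),
          if (n:ℤ) + 1 - (k:ℤ) ≤ 2*j ∧ 2*j < (n:ℤ) + 1 + (k:ℤ) then modBinom n q (j-1) else 0) := by
    rw [← Finset.sum_add_distrib]
    refine Finset.sum_congr rfl fun j _ => ?_
    rw [modBinom_succ]
    split <;> simp
  -- shift the second sum
  have E3 : (∑ j ∈ Icc (-(q:ℤ) - 9) ((n:ℤ) + q + 9),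
        if (n:ℤ) + 1 - (k:ℤ) ≤ 2*j ∧ 2*j < (n:ℤ) + 1 + (k:ℤ) then modBinom n q (j-1) else 0)
      = ∑ j ∈ Icc (-(q:ℤ) - 10) ((n:ℤ) + q + 8),
          if (n:ℤ) - 1 - (k:ℤ) ≤ 2*j ∧ 2*j < (n:ℤ) - 1 + (k:ℤ) then modBinom n q j else 0 := by
    rw [show (-(q:ℤ) - 9) = (-(q:ℤ) - 10) + 1 by ring, show ((n:ℤ) + q + 9) = ((n:ℤ) + q + 8) + 1 by ring]
    rw [← Finset.map_add_right_Icc (-(q:ℤ) - 10) ((n:ℤ) + q + 8) 1, Finset.sum_map]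
    refine Finset.sum_congr rfl fun j _ => ?_
    simp only [addRightEmbedding_apply, add_sub_cancel_right]
    exact if_congr (by constructor <;> intro h <;> omega) rfl rfl
  have E4 : (∑ j ∈ Icc (-(q:ℤ) - 10) ((n:ℤ) + q + 8),
        if (n:ℤ) - 1 - (k:ℤ) ≤ 2*j ∧ 2*j < (n:ℤ) - 1 + (k:ℤ) then modBinom n q j else 0)
      = ∑ j ∈ Icc (-(q:ℤ) - 9) ((n:ℤ) + q + 9),
          if (n:ℤ) - 1 - (k:ℤ) ≤ 2*j ∧ 2*j < (n:ℤ) - 1 + (k:ℤ) then modBinom n q j else 0 := by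
    refine window_congr _ _ _ _ _ _ _ ?_
    intro j h1 h2
    omega
  have E5 : middleSum n q (k+1)
      = ∑ j ∈ Icc (-(q:ℤ) - 9) ((n:ℤ) + q + 9),
          if (n:ℤ) - ((k+1:ℕ):ℤ) ≤ 2*j ∧ 2*j < (n:ℤ) + ((k+1:ℕ):ℤ) then modBinom n q j else 0 :=
    middleSum_eq n q (k+1) (by omega) _ _ (by omega) (by omega)
  have E6 : middleSum n q (k-1)
      = ∑ j ∈ Icc (-(q:ℤ) - 9) ((n:ℤ) + q + 9),
          if (n:ℤ) - ((k-1:ℕ):ℤ) ≤ 2*j ∧ 2*j < (n:ℤ) + ((k-1:ℕ):ℤ) then modBinom n q j else 0 :=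
    middleSum_eq n q (k-1) (by omega) _ _ (by omega) (by omega)
  rw [E1, E2, E3, E4, E5, E6, ← Finset.sum_add_distrib, ← Finset.sum_add_distrib]
  refine Finset.sum_congr rfl fun j _ => ?_
  rw [hcast2, hcast3]
  split_ifs <;> omega

lemma one_le_middleSum (q k : ℕ) (hk : 1 ≤ k) : 1 ≤ middleSum 0 q k := by
  unfold middleSum
  have hmem : (0:ℤ) ∈ Finset.Icc (-(q:ℤ)) (((0:ℕ):ℤ) + q) := by
    simp only [Finset.mem_Icc]
    constructor <;> simp [Int.ofNat_nonneg]
  have hterm : (if ((0:ℕ):ℤ) - (k:ℤ) ≤ 2*(0:ℤ) ∧ 2*(0:ℤ) < ((0:ℕ):ℤ) + (k:ℤ)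
      then modBinom 0 q 0 else 0) = 1 := by
    rw [if_pos]
    · simp [modBinom]
    · have : (1:ℤ) ≤ (k:ℤ) := by exact_mod_cast hk
      constructor <;> omega
  exact le_trans (le_of_eq hterm.symm)
    (Finset.single_le_sum
      (f := fun j : ℤ => if ((0:ℕ):ℤ) - (k:ℤ) ≤ 2*j ∧ 2*j < ((0:ℕ):ℤ) + (k:ℤ)
        then modBinom 0 q j else 0)
      (fun i _ => Nat.zero_le _) hmem)

lemma two_pow_le_middleSum (m q : ℕ) (hq : 1 ≤ q) : 2 ^ m ≤ middleSum m q q := by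
  have hq' : (1:ℤ) ≤ (q:ℤ) := by exact_mod_cast hq
  have expand : ∀ j : ℤ, (if (m:ℤ) - (q:ℤ) ≤ 2*j ∧ 2*j < (m:ℤ) + (q:ℤ) then modBinom m q j else 0)
      = ∑ t ∈ range (m+1),
          if ((m:ℤ) - (q:ℤ) ≤ 2*j ∧ 2*j < (m:ℤ) + (q:ℤ)) then
            (if ((t:ℤ) - j) % (q:ℤ) = 0 then m.choose t else 0) else 0 := by
    intro j
    split_ifs with h
    · rfl
    · simp
  have swap : middleSum m q q
      = ∑ t ∈ range (m+1), ∑ j ∈ Finset.Icc (-(q:ℤ)) ((m:ℤ) + q),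
          if ((m:ℤ) - (q:ℤ) ≤ 2*j ∧ 2*j < (m:ℤ) + (q:ℤ)) then
            (if ((t:ℤ) - j) % (q:ℤ) = 0 then m.choose t else 0) else 0 := by
    unfold middleSum
    rw [← Finset.sum_comm]
    exact Finset.sum_congr rfl fun j _ => expand j
  rw [swap, ← Nat.sum_range_choose m]
  refine Finset.sum_le_sum fun t ht => ?_
  -- choose the representative j* ≡ t in the middle window
  set d : ℤ := Int.ediv (2*(t:ℤ) - (m:ℤ) + (q:ℤ)) (2*(q:ℤ)) with hd
  have hdiv := Int.mul_ediv_add_emod (2*(t:ℤ) - (m:ℤ) + (q:ℤ)) (2*(q:ℤ))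
  have hr0 : 0 ≤ (2*(t:ℤ) - (m:ℤ) + (q:ℤ)) % (2*(q:ℤ)) :=
    Int.emod_nonneg _ (by omega)
  have hr1 : (2*(t:ℤ) - (m:ℤ) + (q:ℤ)) % (2*(q:ℤ)) < 2*(q:ℤ) :=
    Int.emod_lt_of_pos _ (by omega)
  have hlink : 2*((q:ℤ)*d) = 2*(q:ℤ)*d := by ring
  have hdiv' : 2*(q:ℤ)*d + (2*(t:ℤ) - (m:ℤ) + (q:ℤ)) % (2*(q:ℤ)) = 2*(t:ℤ) - (m:ℤ) + (q:ℤ) := by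
    rw [hd]; exact hdiv
  set js : ℤ := (t:ℤ) - (q:ℤ) * d with hjs
  have hwin : (m:ℤ) - (q:ℤ) ≤ 2*js ∧ 2*js < (m:ℤ) + (q:ℤ) := by
    constructor <;> omega
  have htm : (t:ℤ) ≤ (m:ℤ) := by
    have := Finset.mem_range.mp ht
    omega
  have hmem : js ∈ Finset.Icc (-(q:ℤ)) ((m:ℤ) + q) := by
    simp only [Finset.mem_Icc]
    omega
  have hterm : (if ((m:ℤ) - (q:ℤ) ≤ 2*js ∧ 2*js < (m:ℤ) + (q:ℤ)) then
      (if ((t:ℤ) - js) % (q:ℤ) = 0 then m.choose t else 0) else 0) = m.choose t := by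
    rw [if_pos hwin, if_pos]
    rw [hjs]
    have : (t:ℤ) - ((t:ℤ) - (q:ℤ)*d) = (q:ℤ)*d := by ring
    rw [this]
    exact Int.mul_emod_right _ _
  exact le_trans (le_of_eq hterm.symm)
    (Finset.single_le_sum
      (f := fun j : ℤ => if ((m:ℤ) - (q:ℤ) ≤ 2*j ∧ 2*j < (m:ℤ) + (q:ℤ)) then
        (if ((t:ℤ) - j) % (q:ℤ) = 0 then m.choose t else 0) else 0)
      (fun i _ => Nat.zero_le _) hmem)

lemma shift_closed {q : ℕ} [NeZero q] {P : Finset (ZMod q)} {c : ZMod q}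
    (h : ∀ p ∈ P, p - c ∈ P) : ∀ (m : ℕ), ∀ p ∈ P, p - (m : ZMod q) * c ∈ P := by
  intro m
  induction m with
  | zero => intro p hp; simpa using hp
  | succ m ihm =>
      intro p hp
      have h1 := h _ (ihm p hp)
      have h2 : p - ((m:ZMod q)+1) * c = p - (m:ZMod q)*c - c := by ring
      rw [show ((m+1 : ℕ) : ZMod q) = (m : ZMod q) + 1 by push_cast; ring, h2]
      exact h1

lemma shift_ne {q : ℕ} [NeZero q] {P : Finset (ZMod q)} {c : ZMod q} (hc : IsUnit c)
    (h0 : 0 < P.card) (hq : P.card < q) : P.image (fun t => t - c) ≠ P := by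
  intro hP
  have hcl : ∀ p ∈ P, p - c ∈ P := by
    intro p hp
    rw [← hP]
    exact Finset.mem_image_of_mem _ hp
  obtain ⟨p, hp⟩ := Finset.card_pos.mp h0
  have hPne : P ≠ Finset.univ := by
    intro h
    rw [h, Finset.card_univ, ZMod.card] at hq
    omega
  obtain ⟨y, hy⟩ : ∃ y, y ∉ P := by
    by_contra hcon
    push_neg at hcon
    exact hPne (Finset.eq_univ_iff_forall.mpr hcon)
  obtain ⟨u, hu⟩ := hc
  have hwc : (((((u⁻¹ : (ZMod q)ˣ) : ZMod q) * (p - y)).val : ℕ) : ZMod q) * c = p - y := by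
    rw [ZMod.natCast_rightInverse _]
    calc ((u⁻¹ : (ZMod q)ˣ) : ZMod q) * (p - y) * c
        = (p - y) * (((u⁻¹ : (ZMod q)ˣ) : ZMod q) * (u : ZMod q)) := by rw [hu]; ring
      _ = p - y := by rw [Units.inv_mul]; ring
  have hmem := shift_closed hcl ((((u⁻¹ : (ZMod q)ˣ) : ZMod q) * (p - y)).val) p hp
  rw [hwc, sub_sub_cancel] at hmem
  exact hy hmem

lemma cnt_fiber {n q : ℕ} [NeZero q] (a : Fin n → ZMod q) (S : Finset (Fin n))
    (P : Finset (ZMod q)) :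
    ((S.powerset).filter (fun I => (∑ i ∈ I, a i) ∈ P)).card
      = ∑ s ∈ P, ((S.powerset).filter (fun I => (∑ i ∈ I, a i) = s)).card := by
  rw [Finset.card_eq_sum_card_fiberwise (f := fun I => ∑ i ∈ I, a i) (s := (S.powerset).filter (fun I => (∑ i ∈ I, a i) ∈ P)) (t := P)
      (fun I hI => (Finset.mem_filter.mp hI).2)]
  refine Finset.sum_congr rfl fun s hs => ?_
  congr 1
  rw [Finset.filter_filter]
  apply Finset.filter_congr
  intro I _
  constructor
  · rintro ⟨_, h2⟩; exact h2
  · intro h2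
    refine ⟨?_, h2⟩
    show (∑ i ∈ I, a i) ∈ P
    rw [h2]
    exact hs

lemma cnt_insert {n q : ℕ} [NeZero q] (a : Fin n → ZMod q) {x : Fin n} {S : Finset (Fin n)}
    (hx : x ∉ S) (P : Finset (ZMod q)) :
    (((insert x S).powerset).filter (fun I => (∑ i ∈ I, a i) ∈ P)).card
      = ((S.powerset).filter (fun I => (∑ i ∈ I, a i) ∈ P)).card
        + ((S.powerset).filter (fun I => (∑ i ∈ I, a i) ∈ P.image (fun t => t - a x))).card := by
  rw [Finset.powerset_insert, Finset.filter_union, Finset.card_union_of_disjoint]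
  · congr 1
    have himg : (S.powerset.image (insert x)).filter (fun I => (∑ i ∈ I, a i) ∈ P)
        = (S.powerset.filter (fun I => (∑ i ∈ I, a i) ∈ P.image (fun t => t - a x))).image
            (insert x) := by
      rw [Finset.filter_image]
      congr 1
      apply Finset.filter_congr
      intro I hI
      have hIS : I ⊆ S := Finset.mem_powerset.mp hI
      have hxI : x ∉ I := fun h => hx (hIS h)
      rw [Finset.sum_insert hxI]
      constructor
      · intro hmem
        exact Finset.mem_image.mpr ⟨a x + ∑ i ∈ I, a i, hmem, by ring⟩
      · intro hmem
        obtain ⟨t, htP, ht⟩ := Finset.mem_image.mp hmem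
        have : a x + ∑ i ∈ I, a i = t := by rw [← ht]; ring
        rw [this]; exact htP
    rw [himg]
    apply Finset.card_image_of_injOn
    intro I hI J hJ hIJ
    simp only [Finset.coe_filter, Set.mem_setOf_eq, Finset.mem_powerset] at hI hJ
    have hxI : x ∉ I := fun h => hx (hI.1 h)
    have hxJ : x ∉ J := fun h => hx (hJ.1 h)
    have := congrArg (fun T => Finset.erase T x) hIJ
    simpa [Finset.erase_insert hxI, Finset.erase_insert hxJ] using this
  · rw [Finset.disjoint_left]
    intro J h1 h2
    have h1' : J ⊆ S := Finset.mem_powerset.mp (Finset.mem_filter.mp h1).1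
    obtain ⟨I, _, rfl⟩ := Finset.mem_image.mp (Finset.mem_filter.mp h2).1
    exact hx (h1' (Finset.mem_insert_self x I))

lemma key (q : ℕ) [NeZero q] {n : ℕ} (a : Fin n → ZMod q) (ha : ∀ i, IsUnit (a i))
    (S : Finset (Fin n)) :
    ∀ P : Finset (ZMod q),
      ((S.powerset).filter (fun I => (∑ i ∈ I, a i) ∈ P)).card ≤ middleSum S.card q P.card := by
  have hq1 : 1 ≤ q := Nat.one_le_iff_ne_zero.mpr (NeZero.ne q)
  induction S using Finset.induction_on with
  | empty =>
      intro P
      rw [Finset.powerset_empty, Finset.card_empty]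
      by_cases h0 : (0 : ZMod q) ∈ P
      · have hP1 : 1 ≤ P.card := Finset.card_pos.mpr ⟨0, h0⟩
        refine le_trans (le_trans (Finset.card_filter_le _ _) ?_) (one_le_middleSum q P.card hP1)
        simp
      · have : ({∅} : Finset (Finset (Fin n))).filter (fun I => (∑ i ∈ I, a i) ∈ P) = ∅ := by
          rw [Finset.filter_singleton, if_neg]
          simpa using h0
        rw [this]
        simp
  | @insert x S hx ih =>
      intro P
      have hPq : P.card ≤ q := by
        have := Finset.card_le_univ P
        rwa [ZMod.card] at this
      rcases Nat.eq_zero_or_pos P.card with h0 | hpos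
      · rw [Finset.card_eq_zero] at h0
        subst h0
        simp
      rcases eq_or_lt_of_le hPq with heq | hlt
      · -- P = univ
        have hPuniv : P = Finset.univ := Finset.eq_univ_of_card P (by rw [heq, ZMod.card])
        have hfull : ((insert x S).powerset).filter (fun I => (∑ i ∈ I, a i) ∈ P)
            = (insert x S).powerset := by
          apply Finset.filter_true_of_mem
          intro I _
          rw [hPuniv]
          exact Finset.mem_univ _
        rw [hfull, Finset.card_powerset, Finset.card_insert_of_notMem hx, heq]
        exact two_pow_le_middleSum (S.card + 1) q hq1
      · -- 0 < P.card < q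
        set k := P.card with hk
        set P' := P.image (fun t => t - a x) with hP'def
        have hinj : Function.Injective (fun t : ZMod q => t - a x) := by
          intro u v h
          simpa using congrArg (fun z => z + a x) h
        have hcard' : P'.card = k := by rw [hP'def, Finset.card_image_of_injective _ hinj]
        have hne : P' ≠ P := shift_ne (ha x) hpos hlt
        have hI0lt : (P ∩ P').card < k := by
          rcases eq_or_lt_of_le (Finset.card_le_card (Finset.inter_subset_left : P ∩ P' ⊆ P)) with he | hlt2
          · exfalso
            have h1 : P ∩ P' = P :=
              Finset.eq_of_subset_of_card_le Finset.inter_subset_left (le_of_eq he.symm)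
            have hsub : P ⊆ P' := by rw [← h1]; exact Finset.inter_subset_right
            exact hne (Finset.eq_of_subset_of_card_le hsub (by omega)).symm
          · exact hlt2
        have hcardUI : (P ∪ P').card + (P ∩ P').card = P.card + P'.card :=
          Finset.card_union_add_card_inter P P'
        set i := (P ∩ P').card with hidef
        set u := (P ∪ P').card with hudef
        have hu : u + i = 2*k := by omega
        have hik : i ≤ k - 1 := by omega
        have huk : k + 1 ≤ u := by omega
        set D := (P ∪ P') \ (P ∩ P') with hD
        have hIU : P ∩ P' ⊆ P ∪ P' :=
          Finset.inter_subset_left.trans Finset.subset_union_left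
        have hDcard : D.card = u - i := by rw [hD, Finset.card_sdiff_of_subset hIU]
        obtain ⟨D₁, hD₁sub, hD₁card⟩ := Finset.exists_subset_card_eq (show k+1-i ≤ D.card by omega)
        set A := (P ∩ P') ∪ D₁ with hA
        set B := (P ∩ P') ∪ (D \ D₁) with hB
        have hdisjD : Disjoint (P ∩ P') D := by rw [hD]; exact Finset.disjoint_sdiff
        have hdisjA : Disjoint (P ∩ P') D₁ := hdisjD.mono_right hD₁sub
        have hdisjB : Disjoint (P ∩ P') (D \ D₁) := hdisjD.mono_right (Finset.sdiff_subset)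
        have hAcard : A.card = k + 1 := by
          rw [hA, Finset.card_union_of_disjoint hdisjA, hD₁card]
          omega
        have hDD1 : (D \ D₁).card = D.card - (k+1-i) := by
          rw [Finset.card_sdiff_of_subset hD₁sub, hD₁card]
        have hBcard : B.card = k - 1 := by
          rw [hB, Finset.card_union_of_disjoint hdisjB, hDD1]
          omega
        -- sum bookkeeping
        set N : ZMod q → ℕ := fun s => ((S.powerset).filter (fun I => (∑ i ∈ I, a i) = s)).card
          with hN
        have e6 : ∑ s ∈ P ∪ P', N s = ∑ s ∈ D, N s + ∑ s ∈ P ∩ P', N s := by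
          rw [hD, Finset.sum_sdiff hIU]
        have e7 : ∑ s ∈ D, N s = ∑ s ∈ D \ D₁, N s + ∑ s ∈ D₁, N s := by
          rw [Finset.sum_sdiff hD₁sub]
        have e8 : ∑ s ∈ A, N s = ∑ s ∈ P ∩ P', N s + ∑ s ∈ D₁, N s := Finset.sum_union hdisjA
        have e9 : ∑ s ∈ B, N s = ∑ s ∈ P ∩ P', N s + ∑ s ∈ D \ D₁, N s := Finset.sum_union hdisjB
        have e10 : ∑ s ∈ P ∪ P', N s + ∑ s ∈ P ∩ P', N s = ∑ s ∈ P, N s + ∑ s ∈ P', N s :=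
          Finset.sum_union_inter
        have main : ((insert x S).powerset.filter (fun I => (∑ i ∈ I, a i) ∈ P)).card
            = ∑ s ∈ A, N s + ∑ s ∈ B, N s := by
          rw [cnt_insert a hx P, cnt_fiber a S P, cnt_fiber a S (P.image (fun t => t - a x))]
          rw [← hP'def]
          simp only [hN] at e6 e7 e8 e9 e10 ⊢
          omega
        rw [main, Finset.card_insert_of_notMem hx]
        have hA' := ih A
        have hB' := ih B
        rw [cnt_fiber a S A, hAcard] at hA'
        rw [cnt_fiber a S B, hBcard] at hB'
        have hms : middleSum (S.card + 1) q k = middleSum S.card q (k+1) + middleSum S.card q (k-1) :=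
          middleSum_succ S.card q k hq1 hpos (le_of_lt hlt)
        rw [hms]
        simp only [hN]
        omega

theorem griggs_main (q n k : ℕ) [NeZero q] (a : Fin n → ZMod q)
    (ha : ∀ i, IsUnit (a i)) (P : Finset (ZMod q)) (hP : P.card = k) :
    ((Finset.univ : Finset (Finset (Fin n))).filter
        (fun I => (∑ i ∈ I, a i) ∈ P)).card ≤ middleSum n q k := by
  subst hP
  have h := key q a ha Finset.univ P
  rw [Finset.powerset_univ] at h
  simpa using h
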